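/- arXiv:2510.11023 — 5 statements merged into one kernel-verified Lean document; each statement's English description precedes it below -/
import Mathlib

section
/- Let V be a real normed vector space and C_𝒢, C_ℱ > 1. For each n let 𝒢ₙ, ℱₙ : V^{n+1} → V satisfy ‖𝒢ₙ(V₀,…,Vₙ) − 𝒢ₙ(W₀,…,Wₙ)‖ ≤ C_𝒢 max_{0≤j≤n}‖Vⱼ − Wⱼ‖ and ‖ℱₙ(V₀,…,Vₙ) − ℱₙ(W₀,…,Wₙ)‖ ≤ C_ℱ max_{0≤j≤n}‖Vⱼ − Wⱼ‖. Let u, U : ℕ → V with U₀ = u₀ and U_{n+1} = ℱₙ(U₀,…,Uₙ), and let parareal iterates satisfy U^k₀ = u₀ and U^{k+1}_{n+1} = 𝒢ₙ(U^{k+1}₀,…,U^{k+1}ₙ) + ℱₙ(U^k₀,…,U^kₙ) − 𝒢ₙ(U^k₀,…,U^kₙ). Define the running maximal error E^kₙ := max_{0≤j≤n} ‖u_j − U^k_j‖ and the fine defect ε_ℱ := sup_{j≥0} ‖u_{j+1} − ℱⱼ(U₀,…,Uⱼ)‖ (assumed finite). Then for all k, n ≥ 0: E^{k+1}_{n+1}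 ≤ (1 + C_ℱ)·ε_ℱ + (C_ℱ + C_𝒢)·E^kₙ + C_𝒢·E^{k+1}ₙ. -/
/-- The core recurrence inequality from the proof of the parareal convergence
theorem: with Lipschitz coarse and fine propagators (constants `CG, CF > 1`),
the running maximal parareal error `E^k_n = max_{0≤j≤n} ‖u_j − U^k_j‖`
satisfies `E^{k+1}_{n+1} ≤ (1+C_ℱ) ε_ℱ + (C_ℱ+C_𝒢) E^k_n + C_𝒢 E^{k+1}_n`,
where `ε_ℱ = sup_{j≥0} ‖u_{j+1} − ℱ_j(U_{0:j})‖` is the (finite) fine defect. -/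
theorem parareal_error_recurrence
    (V : Type*) [NormedAddCommGroup V] [NormedSpace ℝ V]
    (CG CF : ℝ) (hCG : 1 < CG) (hCF : 1 < CF)
    (G F : (n : ℕ) → (Fin (n + 1) → V) → V)
    (hG : ∀ (n : ℕ) (v w : Fin (n + 1) → V),
      ‖G n v - G n w‖ ≤
        CG * Finset.univ.sup' Finset.univ_nonempty (fun j => ‖v j - w j‖))
    (hF : ∀ (n : ℕ) (v w : Fin (n + 1) → V),
      ‖F n v - F n w‖ ≤
        CF * Finset.univ.sup' Finset.univ_nonempty (fun j => ‖v j - w j‖))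
    (u U : ℕ → V)
    (hU0 : U 0 = u 0)
    (hUfine : ∀ n : ℕ, U (n + 1) = F n (fun j : Fin (n + 1) => U (j : ℕ)))
    (Up : ℕ → ℕ → V)
    (hPinit : ∀ k : ℕ, Up k 0 = u 0)
    (hPiter : ∀ k n : ℕ, Up (k + 1) (n + 1) =
      G n (fun j : Fin (n + 1) => Up (k + 1) (j : ℕ)) +
        F n (fun j : Fin (n + 1) => Up k (j : ℕ)) -
        G n (fun j : Fin (n + 1) => Up k (j : ℕ)))
    (hbdd : BddAbove (Set.range fun j : ℕ =>
      ‖u (j + 1) - F j (fun i : Fin (j + 1) => U (i : ℕ))‖)) :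
    ∀ k n : ℕ,
      (Finset.range (n + 2)).sup' (Finset.nonempty_range_iff.mpr (by omega))
          (fun j => ‖u j - Up (k + 1) j‖) ≤
        (1 + CF) * (⨆ j : ℕ, ‖u (j + 1) - F j (fun i : Fin (j + 1) => U (i : ℕ))‖) +
          (CF + CG) * (Finset.range (n + 1)).sup'
            (Finset.nonempty_range_iff.mpr (Nat.succ_ne_zero n))
            (fun j => ‖u j - Up k j‖) +
          CG * (Finset.range (n + 1)).sup'
            (Finset.nonempty_range_iff.mpr (Nat.succ_ne_zero n))
            (fun j => ‖u j - Up (k + 1) j‖) := by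

  intro k n
  set ε := ⨆ j : ℕ, ‖u (j + 1) - F j (fun i : Fin (j + 1) => U (i : ℕ))‖ with hεdef
  have hε0 : 0 ≤ ε := Real.iSup_nonneg fun j => norm_nonneg _
  have hεle : ∀ j : ℕ, ‖u (j + 1) - F j (fun i : Fin (j + 1) => U (i : ℕ))‖ ≤ ε :=
    fun j => le_ciSup hbdd j
  have hUu : ∀ j : ℕ, ‖u j - U j‖ ≤ ε := by
    intro j
    cases j with
    | zero => simpa [hU0] using hε0
    | succ m => rw [hUfine m]; exact hεle m
  set Ek := (Finset.range (n + 1)).sup'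
      (Finset.nonempty_range_iff.mpr (Nat.succ_ne_zero n))
      (fun j => ‖u j - Up k j‖) with hEkdef
  set Ek1 := (Finset.range (n + 1)).sup'
      (Finset.nonempty_range_iff.mpr (Nat.succ_ne_zero n))
      (fun j => ‖u j - Up (k + 1) j‖) with hEk1def
  have hEk0 : 0 ≤ Ek :=
    le_trans (norm_nonneg _) (Finset.le_sup' (fun j => ‖u j - Up k j‖)
      (Finset.mem_range.mpr (Nat.succ_pos n)))
  have hEk10 : 0 ≤ Ek1 :=
    le_trans (norm_nonneg _) (Finset.le_sup' (fun j => ‖u j - Up (k + 1) j‖)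
      (Finset.mem_range.mpr (Nat.succ_pos n)))
  apply Finset.sup'_le
  intro j hj
  by_cases hjn : j < n + 1
  · have h1 : ‖u j - Up (k + 1) j‖ ≤ Ek1 := Finset.le_sup' (fun j => ‖u j - Up (k + 1) j‖) (Finset.mem_range.mpr hjn)
    nlinarith [hCG.le, hCF.le]
  · have hj' : j = n + 1 := by
      have := Finset.mem_range.mp hj; omega
    subst hj'
    rw [hPiter k n]
    have key : u (n + 1) - (G n (fun j : Fin (n + 1) => Up (k + 1) (j : ℕ)) +
        F n (fun j : Fin (n + 1) => Up k (j : ℕ)) -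
        G n (fun j : Fin (n + 1) => Up k (j : ℕ)))
        = (u (n + 1) - F n (fun i : Fin (n + 1) => U (i : ℕ)))
          + (F n (fun i : Fin (n + 1) => U (i : ℕ)) - F n (fun j : Fin (n + 1) => Up k (j : ℕ)))
          + (G n (fun j : Fin (n + 1) => Up k (j : ℕ)) - G n (fun j : Fin (n + 1) => Up (k + 1) (j : ℕ))) := by
      abel
    rw [key]
    have hSF : (Finset.univ.sup' Finset.univ_nonempty
        (fun i : Fin (n + 1) => ‖U (i : ℕ) - Up k (i : ℕ)‖)) ≤ ε + Ek := by
      apply Finset.sup'_le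
      intro i _
      calc ‖U (i : ℕ) - Up k (i : ℕ)‖
          ≤ ‖U (i : ℕ) - u (i : ℕ)‖ + ‖u (i : ℕ) - Up k (i : ℕ)‖ := norm_sub_le_norm_sub_add_norm_sub _ _ _
        _ ≤ ε + Ek := by
            refine add_le_add ?_ (Finset.le_sup' (fun j => ‖u j - Up k j‖) (Finset.mem_range.mpr i.isLt))
            rw [norm_sub_rev]; exact hUu i
    have hSG : (Finset.univ.sup' Finset.univ_nonempty
        (fun i : Fin (n + 1) => ‖Up k (i : ℕ) - Up (k + 1) (i : ℕ)‖)) ≤ Ek + Ek1 := by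
      apply Finset.sup'_le
      intro i _
      calc ‖Up k (i : ℕ) - Up (k + 1) (i : ℕ)‖
          ≤ ‖Up k (i : ℕ) - u (i : ℕ)‖ + ‖u (i : ℕ) - Up (k + 1) (i : ℕ)‖ := norm_sub_le_norm_sub_add_norm_sub _ _ _
        _ ≤ Ek + Ek1 := by
            refine add_le_add ?_ (Finset.le_sup' (fun j => ‖u j - Up (k + 1) j‖) (Finset.mem_range.mpr i.isLt))
            rw [norm_sub_rev]
            exact Finset.le_sup' (fun j => ‖u j - Up k j‖) (Finset.mem_range.mpr i.isLt)
    have hF' := hF n (fun i : Fin (n + 1) => U (i : ℕ)) (fun j : Fin (n + 1) => Up k (j : ℕ))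
    have hG' := hG n (fun j : Fin (n + 1) => Up k (j : ℕ)) (fun j : Fin (n + 1) => Up (k + 1) (j : ℕ))
    have htri : ‖(u (n + 1) - F n (fun i : Fin (n + 1) => U (i : ℕ)))
          + (F n (fun i : Fin (n + 1) => U (i : ℕ)) - F n (fun j : Fin (n + 1) => Up k (j : ℕ)))
          + (G n (fun j : Fin (n + 1) => Up k (j : ℕ)) - G n (fun j : Fin (n + 1) => Up (k + 1) (j : ℕ)))‖
        ≤ ‖u (n + 1) - F n (fun i : Fin (n + 1) => U (i : ℕ))‖
          + ‖F n (fun i : Fin (n + 1) => U (i : ℕ)) - F n (fun j : Fin (n + 1) => Up k (j : ℕ))‖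
          + ‖G n (fun j : Fin (n + 1) => Up k (j : ℕ)) - G n (fun j : Fin (n + 1) => Up (k + 1) (j : ℕ))‖ :=
      norm_add₃_le
    refine htri.trans ?_
    have h1 := hεle n
    have h2 : ‖F n (fun i : Fin (n + 1) => U (i : ℕ)) - F n (fun j : Fin (n + 1) => Up k (j : ℕ))‖
        ≤ CF * (ε + Ek) := hF'.trans (by nlinarith [hCF.le])
    have h3 : ‖G n (fun j : Fin (n + 1) => Up k (j : ℕ)) - G n (fun j : Fin (n + 1) => Up (k + 1) (j : ℕ))‖
        ≤ CG * (Ek + Ek1) := hG'.trans (by nlinarith [hCG.le])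
    nlinarith [hCF.le, hCG.le]
end

section
/- Let (E^kₙ)_{k,n∈ℕ} be a family of nonnegative real numbers and a, b, c > 0 such that E^{k+1}_{n+1} ≤ a + b·E^kₙ + c·E^{k+1}ₙ for all k, n ≥ 0 and E^k₀ = 0 for all k. Then for all k ≥ 1 and n ≥ 1, E^kₙ ≤ a·∑_{j=0}^{k−1} ∑_{i=0}^{n−j−1} binom(i+j, j)·c^i·b^j + (max_{0≤m≤n} E⁰ₘ)·b^k·∑_{j=k}^{n−1} binom(j−1, k−1)·c^{j−k}, where sums over empty index ranges are zero. -/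
namespace DiscreteGronwallAux

open Finset

/-- Inner single-index sum `∑_{i<m} C(i+j,j) c^i`. -/
def h (c : ℝ) (j m : ℕ) : ℝ := ∑ i ∈ Finset.range m, (((i + j).choose j : ℕ) : ℝ) * c ^ i

/-- The double binomial sum appearing in the bound. -/
def S (b c : ℝ) (k n : ℕ) : ℝ :=
  ∑ j ∈ Finset.range k, ∑ i ∈ Finset.range (n - j),
    (((i + j).choose j : ℕ) : ℝ) * c ^ i * b ^ j

/-- The homogeneous-part sum appearing in the bound. -/
def T (c : ℝ) (k n : ℕ) : ℝ :=
  ∑ j ∈ Finset.Ico k n, (((j - 1).choose (k - 1) : ℕ) : ℝ) * c ^ (j - k)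

lemma h_nonneg {c : ℝ} (hc : 0 ≤ c) (j m : ℕ) : 0 ≤ h c j m :=
  Finset.sum_nonneg fun i _ => by positivity

lemma h_zero (c : ℝ) (j : ℕ) : h c j 0 = 0 := by simp [h]

lemma h0_succ (c : ℝ) (m : ℕ) : h c 0 (m + 1) = 1 + c * h c 0 m := by
  simp only [h, Nat.add_zero, Nat.choose_zero_right, Nat.cast_one, one_mul]
  rw [Finset.sum_range_succ' (fun i => c ^ i) m, Finset.mul_sum]
  simp [pow_succ, mul_comm]
  ring

lemma h_rec (c : ℝ) (j m : ℕ) : h c (j + 1) m = h c j m + c * h c (j + 1) (m - 1) := by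
  cases m with
  | zero => simp [h]
  | succ m =>
    simp only [Nat.succ_sub_one]
    unfold h
    rw [Finset.sum_range_succ' (fun i => (((i + (j + 1)).choose (j + 1) : ℕ) : ℝ) * c ^ i) m,
        Finset.sum_range_succ' (fun i => (((i + j).choose j : ℕ) : ℝ) * c ^ i) m]
    have key : ∑ i ∈ Finset.range m, (((i + 1 + (j + 1)).choose (j + 1) : ℕ) : ℝ) * c ^ (i + 1)
        = ∑ i ∈ Finset.range m, (((i + 1 + j).choose j : ℕ) : ℝ) * c ^ (i + 1)
          + c * ∑ i ∈ Finset.range m, (((i + (j + 1)).choose (j + 1) : ℕ) : ℝ) * c ^ i := by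
      rw [Finset.mul_sum, ← Finset.sum_add_distrib]
      refine Finset.sum_congr rfl fun i _ => ?_
      have e : i + 1 + (j + 1) = (i + 1 + j) + 1 := by ring
      rw [e, Nat.choose_succ_succ]
      have e2 : i + (j + 1) = i + 1 + j := by ring
      rw [e2]
      push_cast
      ring
    rw [key]
    simp [Nat.choose_self]
    ring

lemma S_eq (b c : ℝ) (k n : ℕ) :
    S b c k n = ∑ j ∈ Finset.range k, h c j (n - j) * b ^ j := by
  simp only [S, h, Finset.sum_mul]

lemma S_zero (b c : ℝ) (k : ℕ) : S b c k 0 = 0 := by simp [S]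

lemma S_zero' (b c : ℝ) (n : ℕ) : S b c 0 n = 0 := by simp [S]

lemma S_rec (b c : ℝ) (k n : ℕ) :
    S b c (k + 1) (n + 1) = 1 + b * S b c k n + c * S b c (k + 1) n := by
  rw [S_eq, S_eq, S_eq]
  rw [Finset.sum_range_succ' (fun j => h c j (n + 1 - j) * b ^ j) k,
      Finset.sum_range_succ' (fun j => h c j (n - j) * b ^ j) k]
  simp only [Nat.sub_zero, pow_zero, mul_one]
  have key : ∑ j ∈ Finset.range k, h c (j + 1) (n + 1 - (j + 1)) * b ^ (j + 1)
      = b * ∑ j ∈ Finset.range k, h c j (n - j) * b ^ j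
        + c * ∑ j ∈ Finset.range k, h c (j + 1) (n - (j + 1)) * b ^ (j + 1) := by
    rw [Finset.mul_sum, Finset.mul_sum, ← Finset.sum_add_distrib]
    refine Finset.sum_congr rfl fun j _ => ?_
    have e : n + 1 - (j + 1) = n - j := by omega
    rw [e, h_rec]
    have e2 : n - j - 1 = n - (j + 1) := by omega
    rw [e2]
    ring
  rw [key, h0_succ]
  ring

lemma S_one (b c : ℝ) (k : ℕ) : S b c (k + 1) 1 = 1 := by
  have := S_rec b c k 0
  rw [S_zero, S_zero] at this
  simpa using this

lemma T_eq (c : ℝ) {k : ℕ} (hk : 1 ≤ k) (n : ℕ) : T c k n = h c (k - 1) (n - k) := by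
  unfold T h
  rw [Finset.sum_Ico_eq_sum_range]
  refine Finset.sum_congr rfl fun i _ => ?_
  have e1 : k + i - 1 = i + (k - 1) := by omega
  have e2 : k + i - k = i := by omega
  rw [e1, e2]

lemma T_rec (c : ℝ) {k : ℕ} (hk : 1 ≤ k) (n : ℕ) :
    T c (k + 1) (n + 1) = T c k n + c * T c (k + 1) n := by
  obtain ⟨k, rfl⟩ : ∃ k', k = k' + 1 := ⟨k - 1, by omega⟩
  rw [T_eq c (by omega), T_eq c (by omega), T_eq c (by omega)]
  simp only [Nat.add_sub_cancel]
  have e1 : n + 1 - (k + 1 + 1) = n - (k + 1) := by omega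
  rw [e1, h_rec]
  have e2 : n - (k + 1) - 1 = n - (k + 1 + 1) := by omega
  rw [e2]

lemma T_nonneg {c : ℝ} (hc : 0 ≤ c) (k n : ℕ) : 0 ≤ T c k n :=
  Finset.sum_nonneg fun i _ => by positivity

lemma T_empty (c : ℝ) {k n : ℕ} (h : n ≤ k) : T c k n = 0 := by
  rw [T, Finset.Ico_eq_empty (by omega), Finset.sum_empty]

end DiscreteGronwallAux

namespace Parareal

open DiscreteGronwallAux in
/-- Discrete Gronwall-type lemma (Lemma 3.5): a doubly-indexed nonnegative
sequence satisfying `E^{k+1}_{n+1} ≤ a + b E^k_n + c E^{k+1}_n` with `E^k_0 = 0`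
is bounded explicitly by binomial sums in `b` and `c`. -/
theorem discrete_gronwall
    (E : ℕ → ℕ → ℝ) (a b c : ℝ) (ha : 0 < a) (hb : 0 < b) (hc : 0 < c)
    (hEnn : ∀ k n : ℕ, 0 ≤ E k n)
    (hrec : ∀ k n : ℕ, E (k + 1) (n + 1) ≤ a + b * E k n + c * E (k + 1) n)
    (hE0 : ∀ k : ℕ, E k 0 = 0) :
    ∀ k n : ℕ, 1 ≤ k → 1 ≤ n →
      E k n ≤
        a * ∑ j ∈ Finset.range k, ∑ i ∈ Finset.range (n - j),
            (((i + j).choose j : ℕ) : ℝ) * c ^ i * b ^ j +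
          ((Finset.range (n + 1)).sup' (Finset.nonempty_range_iff.mpr (Nat.succ_ne_zero n))
              (fun m => E 0 m)) * b ^ k *
            ∑ j ∈ Finset.Ico k n, (((j - 1).choose (k - 1) : ℕ) : ℝ) * c ^ (j - k) := by
  set M : ℕ → ℝ := fun n =>
    (Finset.range (n + 1)).sup' (Finset.nonempty_range_iff.mpr (Nat.succ_ne_zero n))
      (fun m => E 0 m) with hMdef
  have hM0 : ∀ n, 0 ≤ M n := fun n =>
    le_trans (hEnn 0 0) (Finset.le_sup' _ (by simp : 0 ∈ Finset.range (n + 1)))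
  have hMle : ∀ n, E 0 n ≤ M (n + 1) := fun n =>
    Finset.le_sup' _ (by simp [Nat.lt_succ_iff] : n ∈ Finset.range (n + 1 + 1))
  have hMmono : ∀ n, M n ≤ M (n + 1) := by
    intro n
    apply Finset.sup'_le
    intro m hm
    exact Finset.le_sup' _ (by simp at hm ⊢; omega)
  have key : ∀ k n : ℕ, 1 ≤ k → 1 ≤ n →
      E k n ≤ a * S b c k n + M n * b ^ k * T c k n := by
    intro k
    induction k with
    | zero => intro n hk hn; omega
    | succ k ihk =>
      intro n
      induction n with
      | zero => intro _ hn; omega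
      | succ n ihn =>
        intro hk hn
        rcases Nat.eq_zero_or_pos n with rfl | hn1
        · -- base case n + 1 = 1
          have h1 := hrec k 0
          rw [hE0, hE0] at h1
          have hE1 : E (k + 1) 1 ≤ a := by linarith
          rw [S_one, T_empty c (by omega)]
          have : a * 1 + M 1 * b ^ (k + 1) * 0 = a := by ring
          rw [this]
          exact hE1
        · -- step case, n ≥ 1
          have hEk1n : E (k + 1) n ≤ a * S b c (k + 1) n + M n * b ^ (k + 1) * T c (k + 1) n :=
            ihn hk hn1
          have hTn : 0 ≤ T c (k + 1) (n + 1) := T_nonneg hc.le _ _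
          have hbp : (0:ℝ) ≤ b ^ (k + 1) := by positivity
          rcases Nat.eq_zero_or_pos k with rfl | hk1
          · -- k + 1 = 1 : use E 0 n ≤ M (n+1)
            have step := hrec 0 n
            have hS : S b c 1 (n + 1) = 1 + c * S b c 1 n := by
              have := S_rec b c 0 n
              rw [S_zero'] at this
              rw [this]; ring
            obtain ⟨m, rfl⟩ : ∃ m, n = m + 1 := ⟨n - 1, by omega⟩
            have hT1 : T c 1 (m + 1 + 1) = h c 0 (m + 1) := by
              rw [T_eq c le_rfl]; norm_num
            have hT2 : T c 1 (m + 1) = h c 0 m := by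
              rw [T_eq c le_rfl]; norm_num
            have hh : h c 0 (m + 1) = 1 + c * h c 0 m := h0_succ c m
            have hhn : 0 ≤ h c 0 m := h_nonneg hc.le 0 m
            have hE0n := hMle (m + 1)
            have hMm := hMmono (m + 1)
            rw [hS, hT1, hh]
            rw [hT2] at hEk1n
            have hc' : c * E 1 (m + 1) ≤ c * (a * S b c 1 (m + 1) + M (m + 1) * b ^ 1 * h c 0 m) :=
              mul_le_mul_of_nonneg_left hEk1n hc.le
            have hb' : b * E 0 (m + 1) ≤ b * M (m + 1 + 1) :=
              mul_le_mul_of_nonneg_left hE0n hb.le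
            have hprod : c * (M (m + 1) * b ^ 1 * h c 0 m) ≤ c * (M (m + 1 + 1) * b ^ 1 * h c 0 m) := by
              apply mul_le_mul_of_nonneg_left _ hc.le
              apply mul_le_mul_of_nonneg_right _ hhn
              exact mul_le_mul_of_nonneg_right hMm (by positivity)
            calc E 1 (m + 1 + 1) ≤ a + b * E 0 (m + 1) + c * E 1 (m + 1) := step
              _ ≤ a + b * M (m + 1 + 1)
                  + c * (a * S b c 1 (m + 1) + M (m + 1) * b ^ 1 * h c 0 m) := by linarith
              _ ≤ a + b * M (m + 1 + 1)
                  + (c * (a * S b c 1 (m + 1)) + c * (M (m + 1 + 1) * b ^ 1 * h c 0 m)) := by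
                    nlinarith [hprod]
              _ = a * (1 + c * S b c 1 (m + 1))
                  + M (m + 1 + 1) * b ^ 1 * (1 + c * h c 0 m) := by ring
          · -- k ≥ 1
            have hEkn : E k n ≤ a * S b c k n + M n * b ^ k * T c k n := ihk n hk1 hn1
            have step := hrec k n
            have hTkn : 0 ≤ T c k n := T_nonneg hc.le _ _
            have hTk1n : 0 ≤ T c (k + 1) n := T_nonneg hc.le _ _
            have hMm := hMmono n
            have h1 : b * E k n ≤ b * (a * S b c k n + M n * b ^ k * T c k n) :=
              mul_le_mul_of_nonneg_left hEkn hb.le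
            have h2 : E (k + 1) (n + 1) ≤ a + b * (a * S b c k n + M n * b ^ k * T c k n)
                + c * (a * S b c (k + 1) n + M n * b ^ (k + 1) * T c (k + 1) n) := by
              have h3 : c * E (k + 1) n
                  ≤ c * (a * S b c (k + 1) n + M n * b ^ (k + 1) * T c (k + 1) n) :=
                mul_le_mul_of_nonneg_left hEk1n hc.le
              linarith
            have h4 : a + b * (a * S b c k n + M n * b ^ k * T c k n)
                + c * (a * S b c (k + 1) n + M n * b ^ (k + 1) * T c (k + 1) n)
                = a * S b c (k + 1) (n + 1) + M n * b ^ (k + 1) * T c (k + 1) (n + 1) := by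
              rw [S_rec, T_rec c hk1]
              ring
            have h5 : M n * b ^ (k + 1) * T c (k + 1) (n + 1)
                ≤ M (n + 1) * b ^ (k + 1) * T c (k + 1) (n + 1) := by
              apply mul_le_mul_of_nonneg_right _ hTn
              exact mul_le_mul_of_nonneg_right hMm hbp
            linarith
  intro k n hk hn
  exact key k n hk hn
end Parareal
end

section
/- Let b, c be real numbers and E₀ ∈ ℝ. Define f^kₙ for k, n ≥ 0 by f^k₀ = 0 for all k, f⁰ₙ = E₀ for all n ≥ 1, and for k ≥ 1, n ≥ 1: f^kₙ = E₀·b^k·∑_{j=k}^{n−1} binom(j−1, k−1)·c^{j−k} (an empty sum being zero). Then f satisfies the homogeneous recurrence f^{k+1}_{n+1} = b·f^kₙ + c·f^{k+1}ₙ for all k ≥ 0 and n ≥ 0. -/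
open Finset

lemma aux_sum (c : ℝ) (k : ℕ) (hk : 1 ≤ k) (n : ℕ) :
    ∑ j ∈ Finset.Ico (k+1) (n+1), (((j-1).choose k : ℕ) : ℝ) * c ^ (j-(k+1))
    = (∑ j ∈ Finset.Ico k n, (((j-1).choose (k-1) : ℕ) : ℝ) * c ^ (j-k))
      + c * ∑ j ∈ Finset.Ico (k+1) n, (((j-1).choose k : ℕ) : ℝ) * c ^ (j-(k+1)) := by
  induction n with
  | zero => simp [Finset.Ico_eq_empty (by omega : ¬ k + 1 < 1)]
  | succ n ih =>
    by_cases hkn : k ≤ n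
    · conv_lhs => rw [Finset.sum_Ico_succ_top (show k+1 ≤ n+1 by omega), ih]
      conv_rhs => rw [Finset.sum_Ico_succ_top (show k ≤ n by omega)]
      by_cases hkn' : k + 1 ≤ n
      · rw [Finset.sum_Ico_succ_top (show k+1 ≤ n by omega)]
        have hch : (n - 1).choose (k - 1) + (n - 1).choose k = n.choose k := by
          obtain ⟨m, rfl⟩ : ∃ m, n = m + 1 := ⟨n - 1, by omega⟩
          obtain ⟨l, rfl⟩ : ∃ l, k = l + 1 := ⟨k - 1, by omega⟩
          simp [Nat.choose_succ_succ']
        have hpow : c * (c ^ (n - (k+1))) = c ^ (n - k) := by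
          rw [← pow_succ']
          congr 1
          omega
        rw [show n + 1 - 1 = n from rfl, show n + 1 - (k+1) = n - k by omega, ← hch]
        push_cast
        linear_combination (-(((n-1).choose k : ℕ) : ℝ)) * hpow
      · have hk' : k = n := by omega
        subst hk'
        simp [Finset.Ico_eq_empty (by omega : ¬ k + 1 < k + 1), Nat.choose_self, Nat.sub_self]
    · simp [Finset.Ico_eq_empty (by omega : ¬ k + 1 < n + 2),
        Finset.Ico_eq_empty (by omega : ¬ k < n + 1),
        Finset.Ico_eq_empty (by omega : ¬ k + 1 < n + 1)]


/-- Explicit solution of the homogeneous two-index linear recurrence appearing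
in the proof of the discrete Gronwall-type lemma: the function defined by
`f^k_0 = 0`, `f^0_n = E₀` for `n ≥ 1`, and
`f^k_n = E₀ b^k ∑_{j=k}^{n−1} binom(j−1,k−1) c^{j−k}` for `k, n ≥ 1`
satisfies `f^{k+1}_{n+1} = b f^k_n + c f^{k+1}_n`. -/
theorem homogeneous_recurrence_solution
    (b c E₀ : ℝ) (f : ℕ → ℕ → ℝ)
    (hf0 : ∀ k : ℕ, f k 0 = 0)
    (hfE : ∀ n : ℕ, 1 ≤ n → f 0 n = E₀)
    (hfk : ∀ k n : ℕ, 1 ≤ k → 1 ≤ n →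
      f k n = E₀ * b ^ k *
        ∑ j ∈ Finset.Ico k n, (((j - 1).choose (k - 1) : ℕ) : ℝ) * c ^ (j - k)) :
    ∀ k n : ℕ, f (k + 1) (n + 1) = b * f k n + c * f (k + 1) n := by
  intro k n
  rcases Nat.eq_zero_or_pos n with hn | hn
  · subst hn
    rw [hf0, hf0, hfk (k+1) 1 (by omega) le_rfl]
    simp [Finset.Ico_eq_empty (by omega : ¬ k + 1 < 1)]
  rcases Nat.eq_zero_or_pos k with hk | hk
  · subst hk
    obtain ⟨m, rfl⟩ : ∃ m, n = m + 1 := ⟨n - 1, by omega⟩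
    rw [hfE (m+1) (by omega), hfk 1 (m+2) le_rfl (by omega), hfk 1 (m+1) le_rfl (by omega)]
    have hr : ∀ N : ℕ, ∑ j ∈ Finset.Ico 1 (N+1), (((j-1).choose 0 : ℕ) : ℝ) * c ^ (j-1)
        = ∑ i ∈ Finset.range N, c ^ i := by
      intro N
      rw [Finset.sum_Ico_eq_sum_range]
      simp
    rw [show m + 2 = (m+1) + 1 from rfl, hr (m+1), hr m,
      geom_sum_succ]
    ring
  · rw [hfk (k+1) (n+1) (by omega) (by omega), hfk k n hk hn,
      hfk (k+1) n (by omega) hn]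
    simp only [Nat.add_sub_cancel]
    rw [aux_sum c k hk n]
    ring
end

section
/- Let a, b, c be real numbers. Define f^kₙ for k, n ≥ 0 by f^kₙ = a·∑_{j=0}^{k−1} ∑_{i=0}^{n−j−1} binom(i+j, j)·c^i·b^j, where sums over empty index ranges are zero (so f⁰ₙ = 0 and f^k₀ = 0). Then f satisfies the nonhomogeneous recurrence f^{k+1}_{n+1} = a + b·f^kₙ + c·f^{k+1}ₙ for all k ≥ 0 and n ≥ 0. -/
open Finset

lemma aux_pascal (c : ℝ) (k m : ℕ) :
    ∑ i ∈ range (m + 1), (((i + (k + 1)).choose (k + 1) : ℕ) : ℝ) * c ^ i =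
    ∑ i ∈ range (m + 1), (((i + k).choose k : ℕ) : ℝ) * c ^ i +
      c * ∑ i ∈ range m, (((i + (k + 1)).choose (k + 1) : ℕ) : ℝ) * c ^ i := by
  induction m with
  | zero => simp
  | succ m ih =>
    have h : (m + 1 + (k + 1)).choose (k + 1)
        = (m + 1 + k).choose k + (m + (k + 1)).choose (k + 1) := by
      have h2 : m + 1 + (k + 1) = (m + 1 + k) + 1 := by omega
      have h3 : m + (k + 1) = m + 1 + k := by omega
      rw [h2, h3, Nat.choose_succ_succ]
    have hr : (((m + 1 + (k + 1)).choose (k + 1) : ℕ) : ℝ)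
        = (((m + 1 + k).choose k : ℕ) : ℝ) + (((m + (k + 1)).choose (k + 1) : ℕ) : ℝ) := by
      exact_mod_cast congrArg (Nat.cast : ℕ → ℝ) h
    rw [sum_range_succ (f := fun i => (((i + (k + 1)).choose (k + 1) : ℕ) : ℝ) * c ^ i)
        (n := m)] at ih
    rw [sum_range_succ (f := fun i => (((i + (k + 1)).choose (k + 1) : ℕ) : ℝ) * c ^ i)
        (n := m + 1),
      sum_range_succ (f := fun i => (((i + k).choose k : ℕ) : ℝ) * c ^ i) (n := m + 1),
      sum_range_succ (f := fun i => (((i + (k + 1)).choose (k + 1) : ℕ) : ℝ) * c ^ i)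
        (n := m)]
    linear_combination ih + hr * c ^ (m + 1)

lemma key (b c : ℝ) (k : ℕ) : ∀ n : ℕ,
    (∑ j ∈ range (k + 1), ∑ i ∈ range (n + 1 - j),
        (((i + j).choose j : ℕ) : ℝ) * c ^ i * b ^ j) =
    1 + b * (∑ j ∈ range k, ∑ i ∈ range (n - j),
        (((i + j).choose j : ℕ) : ℝ) * c ^ i * b ^ j)
      + c * (∑ j ∈ range (k + 1), ∑ i ∈ range (n - j),
        (((i + j).choose j : ℕ) : ℝ) * c ^ i * b ^ j) := by
  induction k with
  | zero =>
    intro n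
    simp only [zero_add, sum_range_one, Nat.sub_zero, Nat.add_zero,
      Nat.choose_zero_right, Nat.cast_one, one_mul, pow_zero, mul_one,
      range_zero, sum_empty, mul_zero, add_zero]
    rw [geom_sum_succ]
    ring
  | succ k ih =>
    intro n
    have hsub : n + 1 - (k + 1) = n - k := by omega
    have hterm : (∑ i ∈ range (n - k),
          (((i + (k + 1)).choose (k + 1) : ℕ) : ℝ) * c ^ i * b ^ (k + 1)) =
        b * (∑ i ∈ range (n - k), (((i + k).choose k : ℕ) : ℝ) * c ^ i * b ^ k)
        + c * (∑ i ∈ range (n - (k + 1)),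
            (((i + (k + 1)).choose (k + 1) : ℕ) : ℝ) * c ^ i * b ^ (k + 1)) := by
      rcases Nat.eq_zero_or_pos (n - k) with h0 | hpos
      · have h1 : n - (k + 1) = 0 := by omega
        simp [h0, h1]
      · obtain ⟨m, hm⟩ : ∃ m, n - k = m + 1 := ⟨n - k - 1, by omega⟩
        have hm2 : n - (k + 1) = m := by omega
        rw [hm, hm2, ← Finset.sum_mul, ← Finset.sum_mul, ← Finset.sum_mul,
          aux_pascal c k m]
        ring
    rw [sum_range_succ (n := k + 1), ih n, hsub,
      sum_range_succ (f := fun j => ∑ i ∈ range (n - j),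
        (((i + j).choose j : ℕ) : ℝ) * c ^ i * b ^ j) (n := k + 1),
      sum_range_succ (f := fun j => ∑ i ∈ range (n - j),
        (((i + j).choose j : ℕ) : ℝ) * c ^ i * b ^ j) (n := k),
      hterm]
    ring

/-- Explicit solution of the nonhomogeneous two-index linear recurrence with
vanishing boundary data appearing in the proof of the discrete Gronwall-type
lemma: `f^k_n = a ∑_{j=0}^{k−1} ∑_{i=0}^{n−j−1} binom(i+j,j) c^i b^j`
satisfies `f^{k+1}_{n+1} = a + b f^k_n + c f^{k+1}_n`. -/
theorem nonhomogeneous_recurrence_solution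
    (a b c : ℝ) (f : ℕ → ℕ → ℝ)
    (hf : ∀ k n : ℕ, f k n =
      a * ∑ j ∈ Finset.range k, ∑ i ∈ Finset.range (n - j),
        (((i + j).choose j : ℕ) : ℝ) * c ^ i * b ^ j) :
    ∀ k n : ℕ, f (k + 1) (n + 1) = a + b * f k n + c * f (k + 1) n := by
  intro k n
  rw [hf, hf, hf, key b c k n]
  ring
end

section
/- Let b ≥ 0, c > 1 be real numbers and let k, n be integers with 1 ≤ k ≤ n. Then ∑_{j=0}^{k−1} ∑_{i=0}^{n−j−1} binom(i+j, j)·c^i·b^j ≤ (1/(c−1))·(c·(b+c)^{n−1} − (1+b)^{n−1}). -/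
/-- Estimate for the double binomial sum appearing in the discrete
Gronwall-type bound for the parareal error: for `b ≥ 0`, `c > 1` and
`1 ≤ k ≤ n`,
`∑_{j=0}^{k−1} ∑_{i=0}^{n−j−1} binom(i+j,j) c^i b^j
  ≤ (c (b+c)^{n−1} − (1+b)^{n−1})/(c−1)`. -/
theorem double_binomial_sum_estimate
    (b c : ℝ) (hb : 0 ≤ b) (hc : 1 < c) (k n : ℕ) (hk : 1 ≤ k) (hkn : k ≤ n) :
    ∑ j ∈ Finset.range k, ∑ i ∈ Finset.range (n - j),
        (((i + j).choose j : ℕ) : ℝ) * c ^ i * b ^ j ≤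
      (1 / (c - 1)) * (c * (b + c) ^ (n - 1) - (1 + b) ^ (n - 1)) := by
  obtain ⟨m, rfl⟩ : ∃ m, n = m + 1 := ⟨n - 1, by omega⟩
  have hc0 : (0:ℝ) < c - 1 := by linarith
  have hc1 : c ≠ 1 := by linarith
  simp only [Nat.add_sub_cancel]
  calc
    ∑ j ∈ Finset.range k, ∑ i ∈ Finset.range (m + 1 - j), (((i + j).choose j : ℕ) : ℝ) * c ^ i * b ^ j
        ≤ ∑ j ∈ Finset.range (m + 1), ∑ i ∈ Finset.range (m + 1 - j), (((i + j).choose j : ℕ) : ℝ) * c ^ i * b ^ j := by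
      apply Finset.sum_le_sum_of_subset_of_nonneg (by simpa using hkn)
      intro j _ _
      apply Finset.sum_nonneg
      intro i _
      positivity
    _ ≤ ∑ j ∈ Finset.range (m + 1), ((m.choose j : ℝ) * b ^ j) * ((c ^ (m + 1 - j) - 1) / (c - 1)) := by
      apply Finset.sum_le_sum
      intro j hj
      rw [Finset.mem_range] at hj
      have hsum : ∑ i ∈ Finset.range (m + 1 - j), (((i + j).choose j : ℕ) : ℝ) * c ^ i * b ^ j
          ≤ ∑ i ∈ Finset.range (m + 1 - j), ((m.choose j : ℕ) : ℝ) * c ^ i * b ^ j := by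
        apply Finset.sum_le_sum
        intro i hi
        rw [Finset.mem_range] at hi
        have h : (i + j).choose j ≤ m.choose j := Nat.choose_le_choose j (by omega)
        have hc' : (0:ℝ) ≤ c ^ i := by positivity
        have hb' : (0:ℝ) ≤ b ^ j := by positivity
        gcongr

      refine hsum.trans_eq ?_
      rw [← Finset.sum_mul, ← Finset.mul_sum, geom_sum_eq hc1]
      ring
    _ = (1 / (c - 1)) * (c * (b + c) ^ m - (1 + b) ^ m) := by
      have h1 : (b + c) ^ m = ∑ j ∈ Finset.range (m + 1), b ^ j * c ^ (m - j) * (m.choose j : ℝ) := add_pow b c m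
      have h2 : (1 + b) ^ m = ∑ j ∈ Finset.range (m + 1), (m.choose j : ℝ) * b ^ j := by
        rw [add_comm, add_pow]
        simp [mul_comm]
      rw [h1, h2, Finset.mul_sum, ← Finset.sum_sub_distrib, Finset.mul_sum]
      apply Finset.sum_congr rfl
      intro j hj
      rw [Finset.mem_range] at hj
      have he : m + 1 - j = (m - j) + 1 := by omega
      rw [he]
      field_simp
      ring
end
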